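/- Let M = ⟨S, A, P, R, γ⟩ be a finite MDP with γ ∈ [0,1), let 1 < C < 2, and let π₀ be a policy with full support (π₀(a|s) > 0 for all s ∈ S, a ∈ A). Let (μₙ)ₙ≥0 be probability distributions on S with μₙ(s) > 0 for all s, and let (πₙ)ₙ≥0 be a sequence of policies such that for every n, π_{n+1} ∈ N^C(πₙ) and Σ_s μₙ(s) Σ_a π_{n+1}(a|s) A^{πₙ}(s,a) ≥ Σ_s μₙ(s) Σ_a π'(a|s) A^{πₙ}(s,a) for every policy π' ∈ N^C(πₙ). Then for every s ∈ S, the sequence V^{πₙ}(s) converges to the optimal value V*(s) := sup over all policies π of V^π(s); in particular the returns V^{πₙ}(s_I) converge to V*(s_I) for any designated initial state s_I. -/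

import Mathlib

open Finset

variable {S A : Type*} [Fintype S] [Fintype A]

/-- A (stationary, stochastic) policy: for every state, a probability
distribution over actions. -/
def IsPolicy (π : S → A → ℝ) : Prop :=
  ∀ s, (∀ a, 0 ≤ π s a) ∧ (∑ a, π s a) = 1

/-- The neighborhood `N^C(π)`. -/
def InNbhd (C : ℝ) (π π' : S → A → ℝ) : Prop :=
  IsPolicy π' ∧ (∀ s a, (0 < π s a ↔ 0 < π' s a)) ∧
    ∀ s a, 0 < π s a → (2 - C ≤ π' s a / π s a ∧ π' s a / π s a ≤ C)

/-- The optimal value `V*(s)`: the supremum over all policies of the value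
of the policy at `s` (values being the unique solutions of the Bellman
equations). -/
noncomputable def optVal (P : S → A → S → ℝ) (R : S → A → ℝ) (γ : ℝ) (s : S) : ℝ :=
  sSup { v : ℝ | ∃ (π : S → A → ℝ) (W : S → ℝ), IsPolicy π ∧
    (∀ t, W t = ∑ a, π t a * (R t a + γ * ∑ t', P t a t' * W t')) ∧ W s = v }

/-- Key comparison lemma via the minimum argument. -/
lemma key_nonneg [Nonempty S] (γ : ℝ) (hγ0 : 0 ≤ γ) (hγ1 : γ < 1)
    (p : S → S → ℝ) (hp : ∀ s, (∀ s', 0 ≤ p s s') ∧ (∑ s', p s s') = 1)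
    (D c : S → ℝ) (hc : ∀ s, 0 ≤ c s)
    (hD : ∀ s, c s + γ * ∑ s', p s s' * D s' ≤ D s) :
    ∀ s, c s ≤ D s := by
  have hDnn : ∀ s, 0 ≤ D s := by
    obtain ⟨s₀, -, hs₀⟩ := Finset.exists_min_image Finset.univ D ⟨Classical.arbitrary S, mem_univ _⟩
    have hmin : ∀ s, D s₀ ≤ D s := fun s => hs₀ s (mem_univ s)
    have h1 : γ * D s₀ ≤ D s₀ := by
      have h2 : γ * (∑ s', p s₀ s' * D s₀) ≤ γ * ∑ s', p s₀ s' * D s' := by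
        apply mul_le_mul_of_nonneg_left _ hγ0
        exact Finset.sum_le_sum fun s' _ => mul_le_mul_of_nonneg_left (hmin s') ((hp s₀).1 s')
      have h3 : (∑ s', p s₀ s' * D s₀) = D s₀ := by
        rw [← Finset.sum_mul, (hp s₀).2, one_mul]
      calc γ * D s₀ = γ * ∑ s', p s₀ s' * D s₀ := by rw [h3]
        _ ≤ γ * ∑ s', p s₀ s' * D s' := h2
        _ ≤ c s₀ + γ * ∑ s', p s₀ s' * D s' := le_add_of_nonneg_left (hc s₀)
        _ ≤ D s₀ := hD s₀
    have h4 : 0 ≤ D s₀ := by nlinarith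
    exact fun s => le_trans h4 (hmin s)
  intro s
  have h5 : 0 ≤ γ * ∑ s', p s s' * D s' := by
    apply mul_nonneg hγ0
    exact Finset.sum_nonneg fun s' _ => mul_nonneg ((hp s).1 s') (hDnn s')
  linarith [hD s]

/-- Bellman difference decomposition. -/
lemma diff_eq (P : S → A → S → ℝ) (R : S → A → ℝ) (γ : ℝ)
    (π' : S → A → ℝ) (hπ' : IsPolicy π') (W' W : S → ℝ)
    (hW' : ∀ s, W' s = ∑ a, π' s a * (R s a + γ * ∑ s', P s a s' * W' s')) (s : S) :
    W' s - W s = (∑ a, π' s a * (R s a + γ * (∑ s', P s a s' * W s') - W s))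
      + γ * ∑ s', (∑ a, π' s a * P s a s') * (W' s' - W s') := by
  have hswap : ∑ s', (∑ a, π' s a * P s a s') * (W' s' - W s')
      = ∑ a, π' s a * ∑ s', P s a s' * (W' s' - W s') := by
    simp only [Finset.sum_mul, Finset.mul_sum, mul_assoc]
    exact Finset.sum_comm
  rw [hswap, hW' s]
  have h1 : (∑ a, π' s a * (R s a + γ * (∑ s', P s a s' * W s') - W s))
      = (∑ a, π' s a * (R s a + γ * (∑ s', P s a s' * W s'))) - W s := by
    simp only [mul_sub, Finset.sum_sub_distrib, ← Finset.sum_mul, (hπ' s).2, one_mul]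
  rw [h1]
  simp only [Finset.mul_sum, mul_sub, mul_add, Finset.sum_sub_distrib, Finset.sum_add_distrib]
  have hac : ∀ (U : S → ℝ), ∑ x : A, ∑ y : S, γ * (π' s x * (P s x y * U y))
      = ∑ x : A, ∑ y : S, π' s x * (γ * (P s x y * U y)) := by
    intro U
    refine Finset.sum_congr rfl fun x _ => Finset.sum_congr rfl fun y _ => by ring
  rw [hac, hac]
  ring

/-- Splitting a policy-weighted sum of (f a - c). -/
lemma pol_sum_sub (p : A → ℝ) (hp : (∑ a, p a) = 1) (f : A → ℝ) (c : ℝ) :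
    (∑ a, p a * (f a - c)) = (∑ a, p a * f a) - c := by
  simp only [mul_sub, Finset.sum_sub_distrib, ← Finset.sum_mul, hp, one_mul]

/-- The state-to-state kernel induced by a policy is a probability kernel. -/
lemma mix_prob (P : S → A → S → ℝ) (hP : ∀ s a, (∀ s', 0 ≤ P s a s') ∧ (∑ s', P s a s') = 1)
    (π' : S → A → ℝ) (hπ' : IsPolicy π') :
    ∀ s, (∀ s', 0 ≤ ∑ a, π' s a * P s a s') ∧ (∑ s', ∑ a, π' s a * P s a s') = 1 := by
  intro s
  constructor
  · intro s'
    exact Finset.sum_nonneg fun a _ => mul_nonneg ((hπ' s).1 a) ((hP s a).1 s')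
  · rw [Finset.sum_comm]
    calc ∑ a, ∑ s', π' s a * P s a s' = ∑ a, π' s a * ∑ s', P s a s' := by
          simp [Finset.mul_sum]
      _ = ∑ a, π' s a := by
          refine Finset.sum_congr rfl fun a _ => by rw [(hP s a).2, mul_one]
      _ = 1 := (hπ' s).2

/-- A bound on any solution of the Bellman equations. -/
lemma value_bound [Nonempty S] (P : S → A → S → ℝ)
    (hP : ∀ s a, (∀ s', 0 ≤ P s a s') ∧ (∑ s', P s a s') = 1)
    (R : S → A → ℝ) (γ : ℝ) (hγ0 : 0 ≤ γ) (hγ1 : γ < 1)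
    (B : ℝ) (hB : ∀ s a, |R s a| ≤ B)
    (π' : S → A → ℝ) (hπ' : IsPolicy π') (W : S → ℝ)
    (hW : ∀ t, W t = ∑ a, π' t a * (R t a + γ * ∑ t', P t a t' * W t')) :
    ∀ t, |W t| ≤ B / (1 - γ) := by
  obtain ⟨t₀, -, ht₀⟩ := Finset.exists_max_image Finset.univ (fun t => |W t|)
    ⟨Classical.arbitrary S, mem_univ _⟩
  have hmax : ∀ u, |W u| ≤ |W t₀| := fun u => ht₀ u (mem_univ u)
  have h1 : |W t₀| ≤ B + γ * |W t₀| := by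
    conv_lhs => rw [hW t₀]
    calc |∑ a, π' t₀ a * (R t₀ a + γ * ∑ t', P t₀ a t' * W t')|
        ≤ ∑ a, |π' t₀ a * (R t₀ a + γ * ∑ t', P t₀ a t' * W t')| :=
          Finset.abs_sum_le_sum_abs _ _
      _ ≤ ∑ a, π' t₀ a * (B + γ * |W t₀|) := by
          refine Finset.sum_le_sum fun a _ => ?_
          rw [abs_mul, abs_of_nonneg ((hπ' t₀).1 a)]
          refine mul_le_mul_of_nonneg_left ?_ ((hπ' t₀).1 a)
          have h2 : |∑ t', P t₀ a t' * W t'| ≤ |W t₀| := by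
            calc |∑ t', P t₀ a t' * W t'| ≤ ∑ t', |P t₀ a t' * W t'| :=
                  Finset.abs_sum_le_sum_abs _ _
              _ ≤ ∑ t', P t₀ a t' * |W t₀| := by
                  refine Finset.sum_le_sum fun t' _ => ?_
                  rw [abs_mul, abs_of_nonneg ((hP t₀ a).1 t')]
                  exact mul_le_mul_of_nonneg_left (hmax t') ((hP t₀ a).1 t')
              _ = |W t₀| := by rw [← Finset.sum_mul, (hP t₀ a).2, one_mul]
          calc |R t₀ a + γ * ∑ t', P t₀ a t' * W t'|
              ≤ |R t₀ a| + |γ * ∑ t', P t₀ a t' * W t'| := abs_add_le _ _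
            _ ≤ B + γ * |W t₀| := by
                rw [abs_mul, abs_of_nonneg hγ0]
                exact add_le_add (hB t₀ a) (mul_le_mul_of_nonneg_left h2 hγ0)
      _ = B + γ * |W t₀| := by rw [← Finset.sum_mul, (hπ' t₀).2, one_mul]
  have h3 : |W t₀| ≤ B / (1 - γ) := by
    rw [le_div_iff₀ (by linarith)]
    nlinarith
  exact fun t => le_trans (hmax t) h3

set_option maxHeartbeats 1600000 in
/-- convergence of the value functions to the optimal value under
neighborhood-constrained policy improvement. -/
theorem policy_improvement_converges
    [Nonempty S] [Nonempty A]
    (P : S → A → S → ℝ)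
    (hP : ∀ s a, (∀ s', 0 ≤ P s a s') ∧ (∑ s', P s a s') = 1)
    (R : S → A → ℝ) (γ : ℝ) (hγ : 0 ≤ γ ∧ γ < 1)
    (C : ℝ) (hC : 1 < C ∧ C < 2)
    (π : ℕ → S → A → ℝ)
    (hπ0 : IsPolicy (π 0)) (hfull : ∀ s a, 0 < π 0 s a)
    (μ : ℕ → S → ℝ)
    (hμ : ∀ n, (∀ s, 0 < μ n s) ∧ (∑ s, μ n s) = 1)
    (V : ℕ → S → ℝ)
    (hV : ∀ n s, V n s = ∑ a, π n s a * (R s a + γ * ∑ s', P s a s' * V n s'))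
    (hnb : ∀ n, InNbhd C (π n) (π (n + 1)))
    (hopt : ∀ n (π' : S → A → ℝ), InNbhd C (π n) π' →
      (∑ s, μ n s * ∑ a, π' s a * (R s a + γ * (∑ s', P s a s' * V n s') - V n s)) ≤
      (∑ s, μ n s * ∑ a, π (n + 1) s a * (R s a + γ * (∑ s', P s a s' * V n s') - V n s))) :
    ∀ s, Filter.Tendsto (fun n => V n s) Filter.atTop (nhds (optVal P R γ s)) := by
  obtain ⟨hγ0, hγ1⟩ := hγ
  obtain ⟨hC1, hC2⟩ := hC
  -- every `π n` is a policy with full support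
  have hpol : ∀ n, IsPolicy (π n) := by
    intro n
    induction n with
    | zero => exact hπ0
    | succ n ih => exact (hnb n).1
  have hpos : ∀ n s a, 0 < π n s a := by
    intro n
    induction n with
    | zero => exact hfull
    | succ n ih => exact fun s a => ((hnb n).2.1 s a).mp (ih s a)
  -- per-state optimality of `π (n+1)` within the neighborhood
  have hstate : ∀ n (s₀ : S) (q : A → ℝ), (∑ a, q a) = 1 →
      (∀ a, 2 - C ≤ q a / π n s₀ a ∧ q a / π n s₀ a ≤ C) →
      (∑ a, q a * (R s₀ a + γ * (∑ s', P s₀ a s' * V n s') - V n s₀)) ≤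
        (∑ a, π (n+1) s₀ a * (R s₀ a + γ * (∑ s', P s₀ a s' * V n s') - V n s₀)) := by
    intro n s₀ q hq1 hqr
    have hqpos : ∀ a, 0 < q a := by
      intro a
      have hp := hpos n s₀ a
      have h := (le_div_iff₀ hp).mp (hqr a).1
      nlinarith
    classical
    set π' : S → A → ℝ := fun t => if t = s₀ then q else π (n+1) t with hπ'def
    have hnb' : InNbhd C (π n) π' := by
      refine ⟨?_, ?_, ?_⟩
      · intro t
        by_cases ht : t = s₀
        · simp only [hπ'def, ht, if_pos rfl]
          exact ⟨fun a => le_of_lt (hqpos a), hq1⟩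
        · simp only [hπ'def, if_neg ht]
          exact (hnb n).1 t
      · intro t a
        have h1 : 0 < π' t a := by
          by_cases ht : t = s₀
          · simp only [hπ'def, ht, if_pos rfl]; exact hqpos a
          · simp only [hπ'def, if_neg ht]; exact hpos (n+1) t a
        exact iff_of_true (hpos n t a) h1
      · intro t a hta
        by_cases ht : t = s₀
        · subst ht; simp only [hπ'def, if_pos rfl]; exact hqr a
        · simp only [hπ'def, if_neg ht]; exact (hnb n).2.2 t a hta
    have h := hopt n π' hnb'
    rw [← Finset.add_sum_erase _ _ (mem_univ s₀), ← Finset.add_sum_erase _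
      (fun t => μ n t * ∑ a, π (n+1) t a * (R t a + γ * (∑ s', P t a s' * V n s') - V n t))
      (mem_univ s₀)] at h
    have heq : ∑ t ∈ univ.erase s₀,
        μ n t * ∑ a, π' t a * (R t a + γ * (∑ s', P t a s' * V n s') - V n t)
        = ∑ t ∈ univ.erase s₀,
        μ n t * ∑ a, π (n+1) t a * (R t a + γ * (∑ s', P t a s' * V n s') - V n t) := by
      refine Finset.sum_congr rfl fun t ht => ?_
      have htne : t ≠ s₀ := (Finset.mem_erase.mp ht).1
      simp only [hπ'def, if_neg htne]
    have hq' : π' s₀ = q := by simp [hπ'def]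
    rw [heq, hq'] at h
    have h2 : μ n s₀ * ∑ a, q a * (R s₀ a + γ * (∑ s', P s₀ a s' * V n s') - V n s₀)
        ≤ μ n s₀ * ∑ a, π (n+1) s₀ a * (R s₀ a + γ * (∑ s', P s₀ a s' * V n s') - V n s₀) := by
      linarith
    exact le_of_mul_le_mul_left h2 ((hμ n).1 s₀)
  -- the surrogate of `π n` against itself vanishes
  have hzero : ∀ n s,
      (∑ a, π n s a * (R s a + γ * (∑ s', P s a s' * V n s') - V n s)) = 0 := by
    intro n s
    rw [pol_sum_sub (π n s) (hpol n s).2, ← hV n s, sub_self]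
  -- the surrogate of `π (n+1)` is nonnegative
  have hsurr0 : ∀ n s,
      0 ≤ ∑ a, π (n+1) s a * (R s a + γ * (∑ s', P s a s' * V n s') - V n s) := by
    intro n s
    have h1 := hstate n s (π n s) (hpol n s).2 (fun a => by
      rw [div_self (ne_of_gt (hpos n s a))]
      constructor <;> linarith)
    rw [hzero n s] at h1
    exact h1
  -- value improvement: surrogate lower-bounds the gain
  have himp : ∀ n t,
      (∑ a, π (n+1) t a * (R t a + γ * (∑ s', P t a s' * V n s') - V n t)) ≤
        V (n+1) t - V n t := by
    intro n
    exact key_nonneg γ hγ0 hγ1 (fun u s' => ∑ a, π (n+1) u a * P u a s')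
      (mix_prob P hP (π (n+1)) (hpol (n+1)))
      (fun t => V (n+1) t - V n t)
      (fun t => ∑ a, π (n+1) t a * (R t a + γ * (∑ s', P t a s' * V n s') - V n t))
      (hsurr0 n)
      (fun t => le_of_eq (diff_eq P R γ (π (n+1)) (hpol (n+1)) (V (n+1)) (V n) (hV (n+1)) t).symm)
  have hmono2 : ∀ n t, V n t ≤ V (n+1) t := fun n t => by linarith [himp n t, hsurr0 n t]
  -- a uniform bound on rewards and values
  obtain ⟨B, hB⟩ : ∃ B : ℝ, ∀ s a, |R s a| ≤ B := by
    obtain ⟨B, hB⟩ := Finite.exists_le (fun p : S × A => |R p.1 p.2|)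
    exact ⟨B, fun s a => hB (s, a)⟩
  have hbddV : ∀ n t, |V n t| ≤ B / (1 - γ) :=
    fun n => value_bound P hP R γ hγ0 hγ1 B hB (π n) (hpol n) (V n) (hV n)
  -- the limit value function
  set Wlim : S → ℝ := fun t => ⨆ n, V n t with hWdef
  have hconv : ∀ t, Filter.Tendsto (fun n => V n t) Filter.atTop (nhds (Wlim t)) := by
    intro t
    exact tendsto_atTop_ciSup (monotone_nat_of_le_succ fun n => hmono2 n t)
      ⟨B / (1 - γ), by rintro x ⟨n, rfl⟩; exact (abs_le.mp (hbddV n t)).2⟩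
  have hAdvTend : ∀ t a, Filter.Tendsto
      (fun n => R t a + γ * (∑ s', P t a s' * V n s') - V n t) Filter.atTop
      (nhds (R t a + γ * (∑ s', P t a s' * Wlim s') - Wlim t)) := by
    intro t a
    refine Filter.Tendsto.sub ?_ (hconv t)
    exact Filter.Tendsto.const_add _ (Filter.Tendsto.const_mul _
      (tendsto_finset_sum _ fun s' _ => (hconv s').const_mul (P t a s')))
  -- the limit satisfies the Bellman optimality inequality
  have hTopt : ∀ t a, R t a + γ * (∑ s', P t a s' * Wlim s') - Wlim t ≤ 0 := by
    classical
    by_contra hcon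
    push_neg at hcon
    obtain ⟨t, a₀, ha₀⟩ := hcon
    -- the maximal limit advantage δ and the argmax set G
    obtain ⟨amax, -, hamax'⟩ := Finset.exists_max_image Finset.univ
      (fun a => R t a + γ * (∑ s', P t a s' * Wlim s') - Wlim t) ⟨a₀, mem_univ a₀⟩
    have hamax : ∀ a, R t a + γ * (∑ s', P t a s' * Wlim s') - Wlim t ≤
        R t amax + γ * (∑ s', P t amax s' * Wlim s') - Wlim t := fun a => hamax' a (mem_univ a)
    set δ : ℝ := R t amax + γ * (∑ s', P t amax s' * Wlim s') - Wlim t with hδdef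
    have hδpos : 0 < δ := lt_of_lt_of_le ha₀ (hamax a₀)
    set G : Finset A :=
      univ.filter (fun a => R t a + γ * (∑ s', P t a s' * Wlim s') - Wlim t = δ) with hGdef
    have hamaxG : amax ∈ G := by rw [hGdef]; exact mem_filter.mpr ⟨mem_univ _, rfl⟩
    -- a threshold θ strictly between the argmax advantage and all others (and 0)
    set m : ℝ := (insert (0:ℝ) ((univ \ G).image
      (fun a => R t a + γ * (∑ s', P t a s' * Wlim s') - Wlim t))).max'
      (insert_nonempty _ _) with hmdef
    have hm0 : 0 ≤ m := by rw [hmdef]; exact Finset.le_max' _ 0 (mem_insert_self _ _)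
    have hmf : ∀ a ∉ G, R t a + γ * (∑ s', P t a s' * Wlim s') - Wlim t ≤ m := by
      intro a ha
      rw [hmdef]
      apply Finset.le_max'
      apply mem_insert_of_mem
      exact Finset.mem_image_of_mem _ (Finset.mem_sdiff.mpr ⟨mem_univ a, ha⟩)
    have hmδ : m < δ := by
      rw [hmdef]
      rw [Finset.max'_lt_iff]
      intro x hx
      rcases Finset.mem_insert.mp hx with h0 | himg
      · rw [h0]; exact hδpos
      · obtain ⟨a, haG, rfl⟩ := Finset.mem_image.mp himg
        have h1 : a ∉ G := (Finset.mem_sdiff.mp haG).2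
        rcases lt_or_eq_of_le (hamax a) with h3 | h3
        · exact h3
        · exact absurd (by rw [hGdef]; exact mem_filter.mpr ⟨mem_univ a, h3⟩) h1
    set θ : ℝ := (δ + m) / 2 with hθdef
    have hθpos : 0 < θ := by rw [hθdef]; linarith
    have hθδ : θ < δ := by rw [hθdef]; linarith
    have hmθ : m < θ := by rw [hθdef]; linarith
    -- eventually the advantages of `V n` separate along G
    have hsep : ∀ᶠ n in Filter.atTop, ∀ a,
        (a ∈ G → θ < R t a + γ * (∑ s', P t a s' * V n s') - V n t) ∧
        (a ∉ G → R t a + γ * (∑ s', P t a s' * V n s') - V n t < θ) := by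
      rw [Filter.eventually_all]
      intro a
      by_cases haG : a ∈ G
      · have hlim : θ < R t a + γ * (∑ s', P t a s' * Wlim s') - Wlim t := by
          have := (mem_filter.mp (hGdef ▸ haG)).2
          rw [this]; exact hθδ
        filter_upwards [(hAdvTend t a).eventually (eventually_gt_nhds hlim)] with n hn
        exact ⟨fun _ => hn, fun h' => absurd haG h'⟩
      · have hlim : R t a + γ * (∑ s', P t a s' * Wlim s') - Wlim t < θ :=
          lt_of_le_of_lt (hmf a haG) hmθ
        filter_upwards [(hAdvTend t a).eventually (eventually_lt_nhds hlim)] with n hn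
        exact ⟨fun h' => absurd h' haG, fun _ => hn⟩
    -- the probability mass on G
    set p : ℕ → ℝ := fun n => ∑ a ∈ G, π n t a with hpdef
    have hppos : ∀ n, 0 < p n := fun n => Finset.sum_pos (fun a _ => hpos n t a) ⟨amax, hamaxG⟩
    have hple : ∀ n, p n ≤ 1 := by
      intro n
      refine le_trans (Finset.sum_le_sum_of_subset_of_nonneg (Finset.subset_univ G)
        (fun a _ _ => (hpol n t).1 a)) (le_of_eq (hpol n t).2)
    have hfactor : ∀ (c : ℝ) (F : Finset A) (f g : A → ℝ),
        ∑ a ∈ F, (f a * c) * g a = c * ∑ a ∈ F, f a * g a := by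
      intro c F f g
      rw [Finset.mul_sum]
      exact Finset.sum_congr rfl fun a _ => by ring
    -- E1: the surrogate of `π (n+1)` dominates the G-shifted competitor
    have hE1 : ∀ n, (C-1) * ∑ a ∈ G, π n t a * (R t a + γ * (∑ s', P t a s' * V n s') - V n t)
        ≤ ∑ a, π (n+1) t a * (R t a + γ * (∑ s', P t a s' * V n s') - V n t) := by
      intro n
      set q : A → ℝ := fun a => π n t a * (1 - (C-1) * p n)
        + (if a ∈ G then (C-1) * π n t a else 0) with hqdef
      have hqsum : ∑ a, q a = 1 := by
        rw [hqdef]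
        rw [Finset.sum_add_distrib, ← Finset.sum_mul, (hpol n t).2, one_mul,
          Finset.sum_ite_mem, Finset.univ_inter, ← Finset.mul_sum]
        ring
      have hqr : ∀ a, 2 - C ≤ q a / π n t a ∧ q a / π n t a ≤ C := by
        intro a
        have hπa := hpos n t a
        have hp0 : 0 < p n := hppos n
        have hp1 : p n ≤ 1 := hple n
        by_cases haG : a ∈ G
        · have : q a = π n t a * ((1 - (C-1) * p n) + (C-1)) := by
            rw [hqdef]; simp only [if_pos haG]; ring
          rw [this, mul_comm, mul_div_assoc, div_self (ne_of_gt hπa), mul_one]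
          constructor <;> nlinarith
        · have : q a = π n t a * (1 - (C-1) * p n) := by
            rw [hqdef]; simp only [if_neg haG]; ring
          rw [this, mul_comm, mul_div_assoc, div_self (ne_of_gt hπa), mul_one]
          constructor <;> nlinarith
      have h := hstate n t q hqsum hqr
      have hcalc : ∑ a, q a * (R t a + γ * (∑ s', P t a s' * V n s') - V n t)
          = (1 - (C-1) * p n) * (∑ a, π n t a * (R t a + γ * (∑ s', P t a s' * V n s') - V n t))
            + (C-1) * ∑ a ∈ G, π n t a * (R t a + γ * (∑ s', P t a s' * V n s') - V n t) := by
        rw [hqdef]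
        simp only [add_mul, ite_mul, zero_mul, Finset.sum_add_distrib,
          Finset.sum_ite_mem, Finset.univ_inter]
        rw [hfactor (1 - (C-1) * p n) univ (fun a => π n t a)
            (fun a => R t a + γ * (∑ s', P t a s' * V n s') - V n t)]
        congr 1
        rw [Finset.mul_sum]
        exact Finset.sum_congr rfl fun a _ => by ring
      rw [hcalc, hzero n t, mul_zero, zero_add] at h
      exact h
    -- E2: under separation, the mass on G grows
    have hE2 : ∀ n, (∀ a, (a ∈ G → θ < R t a + γ * (∑ s', P t a s' * V n s') - V n t) ∧
        (a ∉ G → R t a + γ * (∑ s', P t a s' * V n s') - V n t < θ)) →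
        min (C * p n) (C - 1) ≤ p (n+1) := by
      intro n hsepn
      have hrat : ∀ a, (2 - C) * π n t a ≤ π (n+1) t a ∧ π (n+1) t a ≤ C * π n t a := by
        intro a
        have hπa := hpos n t a
        obtain ⟨h1, h2⟩ := (hnb n).2.2 t a hπa
        constructor
        · calc (2 - C) * π n t a ≤ (π (n+1) t a / π n t a) * π n t a :=
              mul_le_mul_of_nonneg_right h1 (le_of_lt hπa)
            _ = π (n+1) t a := by field_simp
        · calc π (n+1) t a = (π (n+1) t a / π n t a) * π n t a := by field_simp
            _ ≤ C * π n t a := mul_le_mul_of_nonneg_right h2 (le_of_lt hπa)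
      by_cases hcase : ∀ a ∈ G, C * π n t a ≤ π (n+1) t a
      · refine le_trans (min_le_left _ _) ?_
        calc C * p n = ∑ a ∈ G, C * π n t a := by rw [Finset.mul_sum]
          _ ≤ ∑ a ∈ G, π (n+1) t a := Finset.sum_le_sum fun a ha => hcase a ha
      · push_neg at hcase
        obtain ⟨b₀, hb₀G, hb₀⟩ := hcase
        have hub : ∀ b ∉ G, π (n+1) t b ≤ (2-C) * π n t b := by
          intro b hbG
          by_contra hbc
          push_neg at hbc
          have hab : b₀ ≠ b := fun h => hbG (h ▸ hb₀G)
          set ε : ℝ := min (C * π n t b₀ - π (n+1) t b₀) (π (n+1) t b - (2-C) * π n t b)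
            with hεdef
          have hεpos : 0 < ε := lt_min (by linarith) (by linarith)
          have hε1 : ε ≤ C * π n t b₀ - π (n+1) t b₀ := min_le_left _ _
          have hε2 : ε ≤ π (n+1) t b - (2-C) * π n t b := min_le_right _ _
          set q' : A → ℝ := fun a => π (n+1) t a + (if a = b₀ then ε else 0)
            - (if a = b then ε else 0) with hq'def
          have hq'sum : ∑ a, q' a = 1 := by
            rw [hq'def]
            rw [Finset.sum_sub_distrib, Finset.sum_add_distrib, Finset.sum_ite_eq',
              Finset.sum_ite_eq', (hpol (n+1) t).2]
            simp
          have hq'r : ∀ a, 2 - C ≤ q' a / π n t a ∧ q' a / π n t a ≤ C := by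
            intro a
            have hπa := hpos n t a
            have hq'a : (2 - C) * π n t a ≤ q' a ∧ q' a ≤ C * π n t a := by
              rw [hq'def]
              by_cases ha1 : a = b₀
              · rw [ha1]
                simp only [eq_self_iff_true, if_true, if_neg hab]
                constructor
                · have := (hrat b₀).1; linarith
                · linarith
              · by_cases ha2 : a = b
                · rw [ha2]
                  have hba : b ≠ b₀ := fun h => hab h.symm
                  simp only [eq_self_iff_true, if_true, if_neg hba]
                  constructor
                  · linarith
                  · have := (hrat b).2; linarith
                · simp only [if_neg ha1, if_neg ha2]
                  have := hrat a; simp only [add_zero, sub_zero]; exact this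
            constructor
            · rw [le_div_iff₀ hπa]; linarith [hq'a.1]
            · rw [div_le_iff₀ hπa]; linarith [hq'a.2]
          have h := hstate n t q' hq'sum hq'r
          have hgain : ∑ a, q' a * (R t a + γ * (∑ s', P t a s' * V n s') - V n t)
              = (∑ a, π (n+1) t a * (R t a + γ * (∑ s', P t a s' * V n s') - V n t))
                + ε * ((R t b₀ + γ * (∑ s', P t b₀ s' * V n s') - V n t)
                  - (R t b + γ * (∑ s', P t b s' * V n s') - V n t)) := by
            rw [hq'def]
            simp only [sub_mul, add_mul, ite_mul, zero_mul, Finset.sum_sub_distrib,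
              Finset.sum_add_distrib, Finset.sum_ite_eq', mem_univ, if_true]
            ring
          have hlt : (R t b + γ * (∑ s', P t b s' * V n s') - V n t)
              < (R t b₀ + γ * (∑ s', P t b₀ s' * V n s') - V n t) :=
            lt_trans ((hsepn b).2 hbG) ((hsepn b₀).1 hb₀G)
          rw [hgain] at h
          nlinarith
        -- now the mass outside G shrank by factor (2-C)
        have hsplit : ∀ k : ℕ, ∑ a, π k t a = p k + ∑ a ∈ univ \ G, π k t a := by
          intro k
          rw [hpdef]
          rw [← Finset.sum_sdiff (Finset.subset_univ G)]
          ring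
        have h2 : ∑ b ∈ univ \ G, π (n+1) t b ≤ (2-C) * ∑ b ∈ univ \ G, π n t b := by
          rw [Finset.mul_sum]
          exact Finset.sum_le_sum fun b hb => hub b (Finset.mem_sdiff.mp hb).2
        have h3 : p (n+1) = 1 - ∑ b ∈ univ \ G, π (n+1) t b := by
          have := hsplit (n+1); rw [(hpol (n+1) t).2] at this; linarith
        have h4 : ∑ b ∈ univ \ G, π n t b = 1 - p n := by
          have := hsplit n; rw [(hpol n t).2] at this; linarith
        refine le_trans (min_le_right _ _) ?_
        have hp1 : 0 < p n := hppos n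
        rw [h3]
        nlinarith [h2, h4]
    -- pick N beyond which separation holds, and derive a uniform positive gain
    obtain ⟨N, hN⟩ := Filter.eventually_atTop.mp hsep
    set β : ℝ := min (p N) (C - 1) with hβdef
    have hβpos : 0 < β := lt_min (hppos N) (by linarith)
    have hpβ : ∀ k : ℕ, β ≤ p (N + k) := by
      intro k
      induction k with
      | zero => exact min_le_left _ _
      | succ k ih =>
        have hstep := hE2 (N + k) (hN (N + k) (Nat.le_add_right N k))
        have hβmin : β ≤ min (C * p (N + k)) (C - 1) := by
          refine le_min ?_ (min_le_right _ _)
          have : p (N + k) ≤ C * p (N + k) := by nlinarith [hppos (N + k)]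
          linarith [ih]
        have : N + (k + 1) = (N + k) + 1 := by omega
        rw [this]
        linarith [hstep]
    have hgainlb : ∀ k : ℕ, (C - 1) * θ * β ≤ V (N + k + 1) t - V (N + k) t := by
      intro k
      have h1 := hE1 (N + k)
      have h2 := himp (N + k) t
      have h3 : θ * p (N + k) ≤ ∑ a ∈ G, π (N + k) t a *
          (R t a + γ * (∑ s', P t a s' * V (N + k) s') - V (N + k) t) := by
        show θ * (∑ a ∈ G, π (N + k) t a) ≤ _
        rw [Finset.mul_sum]
        refine Finset.sum_le_sum fun a ha => ?_
        have hadv := ((hN (N + k) (Nat.le_add_right N k)) a).1 ha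
        have hπ0 := (hpol (N + k) t).1 a
        rw [mul_comm]
        exact mul_le_mul_of_nonneg_left (le_of_lt hadv) hπ0
      have h5 : θ * β ≤ θ * p (N + k) :=
        mul_le_mul_of_nonneg_left (hpβ k) (le_of_lt hθpos)
      have hC1' : (0:ℝ) ≤ C - 1 := by linarith
      linarith [h1, h2, mul_le_mul_of_nonneg_left h3 hC1', mul_le_mul_of_nonneg_left h5 hC1']
    -- the increments tend to zero, contradiction
    have hinc0 : Filter.Tendsto (fun n => V (n+1) t - V n t) Filter.atTop (nhds 0) := by
      have h := ((hconv t).comp (Filter.tendsto_add_atTop_nat 1)).sub (hconv t)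
      simpa [Function.comp] using h
    have hev : ∀ᶠ n in Filter.atTop, V (n+1) t - V n t < (C - 1) * θ * β := by
      have hpos' : 0 < (C - 1) * θ * β :=
        mul_pos (mul_pos (by linarith) hθpos) hβpos
      exact hinc0.eventually (eventually_lt_nhds hpos')
    obtain ⟨M, hM⟩ := Filter.eventually_atTop.mp hev
    have h6 := hgainlb M
    have h7 := hM (N + M) (Nat.le_add_left M N)
    linarith

  -- conclusion
  intro s
  have hsup : optVal P R γ s = Wlim s := by
    simp only [optVal]
    apply le_antisymm
    · refine csSup_le ⟨V 0 s, ⟨π 0, V 0, hπ0, hV 0, rfl⟩⟩ ?_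
      rintro v ⟨π', W', hπ', hW', rfl⟩
      have hdom : ∀ u, (∑ a, π' u a * (R u a + γ * (∑ s', P u a s' * Wlim s'))) ≤ Wlim u := by
        intro u
        calc ∑ a, π' u a * (R u a + γ * (∑ s', P u a s' * Wlim s'))
            ≤ ∑ a, π' u a * Wlim u := Finset.sum_le_sum fun a _ =>
              mul_le_mul_of_nonneg_left (by linarith [hTopt u a]) ((hπ' u).1 a)
          _ = Wlim u := by rw [← Finset.sum_mul, (hπ' u).2, one_mul]
      have hkey := key_nonneg γ hγ0 hγ1 (fun u s' => ∑ a, π' u a * P u a s')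
        (mix_prob P hP π' hπ')
        (fun u => Wlim u - W' u)
        (fun u => Wlim u - (∑ a, π' u a * (R u a + γ * (∑ s', P u a s' * Wlim s'))))
        (fun u => by linarith [hdom u])
        (fun u => by
          have hde := diff_eq P R γ π' hπ' W' Wlim hW' u
          have hs1 : (∑ a, π' u a * (R u a + γ * (∑ s', P u a s' * Wlim s') - Wlim u))
              = (∑ a, π' u a * (R u a + γ * (∑ s', P u a s' * Wlim s'))) - Wlim u :=
            pol_sum_sub (π' u) (hπ' u).2 _ _
          have hs2 : ∑ s', (∑ a, π' u a * P u a s') * (W' s' - Wlim s')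
              = - ∑ s', (∑ a, π' u a * P u a s') * (Wlim s' - W' s') := by
            rw [← Finset.sum_neg_distrib]
            exact Finset.sum_congr rfl fun s' _ => by ring
          rw [hs1, hs2] at hde
          linarith [hde])
      have h1 := hkey s
      have h2 := hdom s
      linarith
    · show (⨆ n, V n s) ≤ _
      refine ciSup_le fun n => le_csSup ?_ ⟨π n, V n, hpol n, hV n, rfl⟩
      refine ⟨B / (1 - γ), ?_⟩
      rintro v ⟨π'', W'', hπ'', hW'', rfl⟩
      exact (abs_le.mp (value_bound P hP R γ hγ0 hγ1 B hB π'' hπ'' W'' hW'' s)).2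
  rw [hsup]
  exact hconv s
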